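/- arXiv:1203.2260 — 2 statements merged into one kernel-verified Lean document; each statement's English description precedes it below -/
import Mathlib

section
/- Let A be a compact Hausdorff second-countable abelian group, let n ≥ 1 and 0 ≤ k ≤ n−1 be integers, let c : {0,1}ⁿ → A be a degree-k cube, and let f : {0,1}ⁿ → Â be a map into the group of continuous characters of A such that for every (n−k)-dimensional face S of {0,1}ⁿ one has ∏_{v ∈ S} f(v)^{ε(v)} = 1 (the trivial character), where ε(v) = (−1)^{h(v)}. Then ∏_{v ∈ {0,1}ⁿ} f(v)(c(v))^{ε(v)} = 1 in the circle group. -/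
open scoped BigOperators

/-- The height `h(v)` of a vertex `v ∈ {0,1}ⁿ`: the number of `1` coordinates. -/
def ht {n : ℕ} (v : Fin n → Bool) : ℕ := (Finset.univ.filter (fun i => v i = true)).card

/-- `S` is a `d`-dimensional face of the cube `{0,1}ⁿ`: the set of vertices obtained by
fixing the coordinates outside some `d`-element subset `J` of the coordinates to
prescribed values. -/
def IsFace {n : ℕ} (d : ℕ) (S : Finset (Fin n → Bool)) : Prop :=
  ∃ (J : Finset (Fin n)) (y : Fin n → Bool), J.card = d ∧
    S = Finset.univ.filter (fun v => ∀ i ∉ J, v i = y i)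

/-- `c : {0,1}ⁿ → B` is a degree-`k` cube: the alternating sum of `c` over every
`(k+1)`-dimensional face vanishes. -/
def IsDegCube {B : Type*} [AddCommGroup B] {n : ℕ} (k : ℕ) (c : (Fin n → Bool) → B) : Prop :=
  ∀ S : Finset (Fin n → Bool), IsFace (k + 1) S →
    ∑ v ∈ S, ((-1 : ℤ) ^ ht v) • c v = 0

section Aux

variable {n : ℕ}

/-- Splitting a face product along a free coordinate. -/
@[to_additive face_split_add]
lemma face_split {J : Finset (Fin n)} (y : Fin n → Bool) {j : Fin n} (hj : j ∈ J)
    {M : Type*} [CommMonoid M] (g : (Fin n → Bool) → M) :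
    ∏ v ∈ Finset.univ.filter (fun v : Fin n → Bool => ∀ i ∉ J, v i = y i), g v =
      (∏ v ∈ Finset.univ.filter
        (fun v : Fin n → Bool => ∀ i ∉ J.erase j, v i = Function.update y j true i), g v) *
      ∏ v ∈ Finset.univ.filter
        (fun v : Fin n → Bool => ∀ i ∉ J.erase j, v i = Function.update y j false i), g v := by
  rw [← Finset.prod_filter_mul_prod_filter_not
    (Finset.univ.filter (fun v : Fin n → Bool => ∀ i ∉ J, v i = y i)) (fun v => v j = true) g]
  congr 1
  · congr 1
    ext v
    simp only [Finset.mem_filter, Finset.mem_univ, true_and, Finset.mem_erase]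
    constructor
    · rintro ⟨h1, h2⟩ i hi
      by_cases hij : i = j
      · subst hij; simp [Function.update_self, h2]
      · have : i ∉ J := by tauto
        rw [Function.update_of_ne hij]; exact h1 i this
    · intro h
      refine ⟨fun i hi => ?_, ?_⟩
      · have hij : i ≠ j := fun e => hi (e ▸ hj)
        have := h i (by tauto)
        rwa [Function.update_of_ne hij] at this
      · have := h j (by simp)
        rwa [Function.update_self] at this
  · congr 1
    ext v
    simp only [Finset.mem_filter, Finset.mem_univ, true_and, Finset.mem_erase,
      Bool.not_eq_true]
    constructor
    · rintro ⟨h1, h2⟩ i hi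
      by_cases hij : i = j
      · subst hij; simp [Function.update_self, h2]
      · have : i ∉ J := by tauto
        rw [Function.update_of_ne hij]; exact h1 i this
    · intro h
      refine ⟨fun i hi => ?_, ?_⟩
      · have hij : i ≠ j := fun e => hi (e ▸ hj)
        have := h i (by tauto)
        rwa [Function.update_of_ne hij] at this
      · have := h j (by simp)
        rwa [Function.update_self] at this

/-- Alternating products over faces of dimension ≥ m vanish if they vanish over m-faces. -/
@[to_additive]
lemma prod_face_one {M : Type*} [CommGroup M] (m : ℕ) (g : (Fin n → Bool) → M)
    (h : ∀ S, IsFace m S → ∏ v ∈ S, g v ^ ((-1:ℤ) ^ ht v) = 1)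
    (d : ℕ) (hd : m ≤ d) (S : Finset (Fin n → Bool)) (hS : IsFace d S) :
    ∏ v ∈ S, g v ^ ((-1:ℤ) ^ ht v) = 1 := by
  induction d generalizing S with
  | zero =>
    have : m = 0 := Nat.le_zero.mp hd
    exact h S (this ▸ hS)
  | succ d ih =>
    rcases Nat.lt_or_ge m (d + 1) with hlt | hge
    · obtain ⟨J, y, hJ, rfl⟩ := hS
      have hJne : J.Nonempty := Finset.card_pos.mp (by omega)
      obtain ⟨j, hj⟩ := hJne
      rw [face_split y hj]
      have hcard : (J.erase j).card = d := by
        rw [Finset.card_erase_of_mem hj, hJ]; omega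
      rw [ih (Nat.lt_succ_iff.mp hlt) _ ⟨J.erase j, Function.update y j true, hcard, rfl⟩,
        ih (Nat.lt_succ_iff.mp hlt) _ ⟨J.erase j, Function.update y j false, hcard, rfl⟩,
        one_mul]
    · have : m = d + 1 := le_antisymm hd hge
      exact h S (this ▸ hS)

lemma zpow_finset_sum {M : Type*} [CommGroup M] (x : M) {ι : Type*} (s : Finset ι) (c : ι → ℤ) :
    x ^ (∑ i ∈ s, c i) = ∏ i ∈ s, x ^ c i := by
  induction s using Finset.cons_induction with
  | empty => simp
  | cons a s ha ih => rw [Finset.sum_cons, Finset.prod_cons, zpow_add, ih]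

lemma sum_sign (V R : Finset (Fin n)) :
    ∑ T ∈ V.powerset.filter (fun T => R ⊆ T), (-1:ℤ) ^ T.card =
      if V = R then (-1:ℤ) ^ R.card else 0 := by
  by_cases hRV : R ⊆ V
  · have key : ∑ T ∈ V.powerset.filter (fun T => R ⊆ T), (-1:ℤ) ^ T.card =
        ∑ U ∈ (V \ R).powerset, (-1:ℤ) ^ (U ∪ R).card := by
      refine Finset.sum_bij' (fun T _ => T \ R) (fun U _ => U ∪ R) ?_ ?_ ?_ ?_ ?_
      · intro T hT
        simp only [Finset.mem_filter, Finset.mem_powerset] at hT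
        exact Finset.mem_powerset.mpr (Finset.sdiff_subset_sdiff hT.1 le_rfl)
      · intro U hU
        simp only [Finset.mem_powerset] at hU
        refine Finset.mem_filter.mpr ⟨Finset.mem_powerset.mpr ?_, Finset.subset_union_right⟩
        exact Finset.union_subset (hU.trans (Finset.sdiff_subset)) hRV
      · intro T hT
        simp only [Finset.mem_filter, Finset.mem_powerset] at hT
        exact Finset.sdiff_union_of_subset hT.2
      · intro U hU
        simp only [Finset.mem_powerset] at hU
        have : Disjoint U R := Finset.disjoint_of_subset_left hU Finset.sdiff_disjoint
        exact Finset.union_sdiff_cancel_right this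
      · intro T hT
        simp only [Finset.mem_filter, Finset.mem_powerset] at hT
        rw [Finset.sdiff_union_of_subset hT.2]
    rw [key]
    have : ∀ U ∈ (V \ R).powerset, (-1:ℤ) ^ (U ∪ R).card = (-1:ℤ) ^ U.card * (-1:ℤ) ^ R.card := by
      intro U hU
      simp only [Finset.mem_powerset] at hU
      have hdis : Disjoint U R := Finset.disjoint_of_subset_left hU Finset.sdiff_disjoint
      rw [Finset.card_union_of_disjoint hdis, pow_add]
    rw [Finset.sum_congr rfl this, ← Finset.sum_mul, Finset.sum_powerset_neg_one_pow_card]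
    by_cases hVR : V = R
    · subst hVR; simp
    · have : V \ R ≠ ∅ := by
        intro e
        exact hVR (le_antisymm (by simpa [Finset.sdiff_eq_empty_iff_subset] using e) hRV)
      simp [this, hVR]
  · have h1 : V.powerset.filter (fun T => R ⊆ T) = ∅ := by
      ext T
      simp only [Finset.mem_filter, Finset.mem_powerset, Finset.notMem_empty, iff_false]
      rintro ⟨hTV, hRT⟩
      exact hRV (hRT.trans hTV)
    have h2 : V ≠ R := by rintro rfl; exact hRV le_rfl
    simp [h1, h2]

/-- Möbius inversion on the Boolean cube (multiplicative form). -/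
lemma mobius {M : Type*} [CommGroup M] (g : (Fin n → Bool) → M) (v : Fin n → Bool) :
    ∏ T ∈ (Finset.univ.filter (fun i => v i = true)).powerset,
      (∏ w ∈ Finset.univ.filter (fun w : Fin n → Bool => ∀ i ∉ T, w i = false),
        g w ^ ((-1:ℤ) ^ ht w)) ^ ((-1:ℤ) ^ T.card) = g v := by
  classical
  set Vv := Finset.univ.filter (fun i => v i = true) with hVv
  have step1 : ∀ T : Finset (Fin n),
      (∏ w ∈ Finset.univ.filter (fun w : Fin n → Bool => ∀ i ∉ T, w i = false),
        g w ^ ((-1:ℤ) ^ ht w)) ^ ((-1:ℤ) ^ T.card)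
      = ∏ w ∈ Finset.univ.filter (fun w : Fin n → Bool => ∀ i ∉ T, w i = false),
        g w ^ ((-1:ℤ) ^ ht w * (-1:ℤ) ^ T.card) := by
    intro T
    rw [← Finset.prod_zpow]
    exact Finset.prod_congr rfl fun w _ => by rw [← zpow_mul]
  rw [Finset.prod_congr rfl (fun T _ => step1 T)]
  -- swap the two products
  have hmem : ∀ (T : Finset (Fin n)) (w : Fin n → Bool),
      (T ∈ Vv.powerset ∧ w ∈ Finset.univ.filter (fun w : Fin n → Bool => ∀ i ∉ T, w i = false))
      ↔ (T ∈ Vv.powerset.filter (fun T =>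
          (Finset.univ.filter (fun i => w i = true)) ⊆ T) ∧ w ∈ (Finset.univ : Finset (Fin n → Bool))) := by
    intro T w
    simp only [Finset.mem_filter, Finset.mem_powerset, Finset.mem_univ, true_and, and_true]
    constructor
    · rintro ⟨h1, h2⟩
      refine ⟨h1, fun i hi => ?_⟩
      simp only [Finset.mem_filter, Finset.mem_univ, true_and] at hi
      by_contra hiT
      rw [h2 i hiT] at hi
      exact Bool.false_ne_true hi
    · rintro ⟨h1, h2⟩
      refine ⟨h1, fun i hi => ?_⟩
      by_contra hw
      have : w i = true := by
        cases hwi : w i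
        · exact absurd hwi hw
        · rfl
      exact hi (h2 (by simp [this]))
  rw [Finset.prod_comm' hmem]
  have step2 : ∀ w : Fin n → Bool,
      ∏ T ∈ Vv.powerset.filter (fun T => (Finset.univ.filter (fun i => w i = true)) ⊆ T),
        g w ^ ((-1:ℤ) ^ ht w * (-1:ℤ) ^ T.card)
      = g w ^ ((-1:ℤ) ^ ht w *
          (if Vv = Finset.univ.filter (fun i => w i = true)
           then (-1:ℤ) ^ (Finset.univ.filter (fun i => w i = true)).card else 0)) := by
    intro w
    rw [← sum_sign]
    rw [Finset.mul_sum, zpow_finset_sum]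
  rw [Finset.prod_congr rfl (fun w _ => step2 w)]
  rw [Finset.prod_eq_single v ?_ ?_]
  · have : Vv = Finset.univ.filter (fun i => v i = true) := hVv
    rw [if_pos this]
    have : ((-1:ℤ) ^ ht v * (-1:ℤ) ^ ht v) = 1 := by
      rw [← pow_add, ← two_mul, pow_mul]; norm_num
    rw [show (Finset.univ.filter (fun i => v i = true)).card = ht v from rfl, this, zpow_one]
  · intro w _ hwv
    have : ¬ Vv = Finset.univ.filter (fun i => w i = true) := by
      intro e
      apply hwv
      funext i
      have : (i ∈ Vv) = (i ∈ Finset.univ.filter (fun i => w i = true)) := by rw [e]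
      simp only [hVv, Finset.mem_filter, Finset.mem_univ, true_and, eq_iff_iff] at this
      cases hwi : w i
      · cases hvi : v i
        · rfl
        · exact absurd (this.mp hvi) (by simp [hwi])
      · cases hvi : v i
        · exact absurd (this.mpr hwi) (by simp [hvi])
        · rfl
    rw [if_neg this, mul_zero, zpow_zero]
  · intro hv; exact absurd (Finset.mem_univ v) hv

end Aux

section Hom

variable {G H : Type*} [AddCommGroup G] [CommGroup H] {ψ : G → H}
  (hψ : ∀ a b, ψ (a + b) = ψ a * ψ b)

include hψ

lemma hom_zero : ψ 0 = 1 := by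
  have := hψ 0 0
  rw [add_zero] at this
  exact (left_eq_mul.mp this)

lemma hom_neg (a : G) : ψ (-a) = (ψ a)⁻¹ := by
  refine eq_inv_of_mul_eq_one_right ?_
  rw [← hψ, add_neg_cancel, hom_zero hψ]

lemma hom_zsmul (z : ℤ) (a : G) : ψ (z • a) = ψ a ^ z := by
  induction z using Int.induction_on with
  | zero => simpa using hom_zero hψ
  | succ m ih =>
    have : ((m : ℤ) + 1) • a = (m : ℤ) • a + a := by rw [add_smul, one_smul]
    rw [this, hψ, ih, zpow_add_one]
  | pred m ih =>
    have : (-(m : ℤ) - 1) • a = (-(m : ℤ)) • a + (-a) := by rw [sub_smul, one_smul, sub_eq_add_neg]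
    rw [this, hψ, ih, hom_neg hψ, zpow_sub_one]

lemma hom_prod_zpow {ι : Type*} (s : Finset ι) (m : ι → ℤ) (c : ι → G) :
    ∏ i ∈ s, ψ (c i) ^ (m i) = ψ (∑ i ∈ s, m i • c i) := by
  induction s using Finset.cons_induction with
  | empty => simpa using (hom_zero hψ).symm
  | cons a s ha ih =>
    rw [Finset.prod_cons, Finset.sum_cons, hψ, ih, hom_zsmul hψ]

end Hom



/-- if `c : {0,1}ⁿ → A` is a degree-`k` cube in a compact abelian group `A`
and `f` assigns a continuous character of `A` to each vertex so that the alternating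
product of the characters over every `(n−k)`-dimensional face is the trivial character,
then `∏_{v ∈ {0,1}ⁿ} f(v)(c(v))^{(−1)^{h(v)}} = 1`. -/
theorem character_cube_pairing
    {A : Type*} [AddCommGroup A] [TopologicalSpace A] [IsTopologicalAddGroup A]
    [CompactSpace A] [T2Space A] [SecondCountableTopology A]
    (n : ℕ) (hn : 1 ≤ n) (k : ℕ) (hk : k ≤ n - 1)
    (c : (Fin n → Bool) → A) (hc : IsDegCube k c)
    (f : (Fin n → Bool) → A → ℂ)
    (hχcont : ∀ v, Continuous (f v))
    (hχnorm : ∀ v a, ‖f v a‖ = 1)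
    (hχmul : ∀ v a b, f v (a + b) = f v a * f v b)
    (hface : ∀ S : Finset (Fin n → Bool), IsFace (n - k) S →
      ∀ a : A, ∏ v ∈ S, (f v a) ^ ((-1 : ℤ) ^ ht v) = 1) :
    ∏ v : Fin n → Bool, (f v (c v)) ^ ((-1 : ℤ) ^ ht v) = 1 := by
  classical
  have hkn : k + 1 ≤ n := by omega
  have hne : ∀ v a, f v a ≠ 0 := fun v a => by
    intro h; have := hχnorm v a; rw [h] at this; simp at this
  set F : (Fin n → Bool) → A → ℂˣ := fun v a => Units.mk0 (f v a) (hne v a) with hF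
  have hFval : ∀ v a, ((F v a : ℂˣ) : ℂ) = f v a := fun v a => rfl
  have hFmul : ∀ v a b, F v (a + b) = F v a * F v b := by
    intro v a b; ext; simp [hF, hχmul]
  have hcoe : ∀ (S : Finset (Fin n → Bool)) (a : A),
      ((∏ w ∈ S, F w a ^ ((-1:ℤ) ^ ht w) : ℂˣ) : ℂ) = ∏ w ∈ S, (f w a) ^ ((-1:ℤ) ^ ht w) := by
    intro S a
    rw [show ((∏ w ∈ S, F w a ^ ((-1:ℤ) ^ ht w) : ℂˣ) : ℂ)
        = (Units.coeHom ℂ) (∏ w ∈ S, F w a ^ ((-1:ℤ) ^ ht w)) from rfl, map_prod]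
    refine Finset.prod_congr rfl fun w _ => ?_
    simp [Units.coeHom_apply, Units.val_zpow_eq_zpow_val, hFval]
  have hface' : ∀ S : Finset (Fin n → Bool), IsFace (n - k) S →
      ∀ a : A, ∏ w ∈ S, F w a ^ ((-1:ℤ) ^ ht w) = 1 := by
    intro S hS a
    apply Units.ext
    rw [hcoe S a, hface S hS a]
    rfl
  -- reduce to units
  suffices h : ∏ v : Fin n → Bool, F v (c v) ^ ((-1:ℤ) ^ ht v) = 1 by
    have := congrArg (Units.coeHom ℂ) h
    rw [map_prod] at this
    simpa [Units.coeHom_apply, Units.val_zpow_eq_zpow_val, hFval] using this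
  -- Möbius expansion of each factor
  have expand : ∀ v : Fin n → Bool,
      F v (c v) ^ ((-1:ℤ) ^ ht v) =
      ∏ T ∈ (Finset.univ.filter (fun i => v i = true)).powerset,
        ∏ w ∈ Finset.univ.filter (fun w : Fin n → Bool => ∀ i ∉ T, w i = false),
          F w (c v) ^ ((-1:ℤ) ^ ht w * ((-1:ℤ) ^ T.card * (-1:ℤ) ^ ht v)) := by
    intro v
    conv_lhs => rw [← mobius (fun w => F w (c v)) v]
    rw [← Finset.prod_zpow]
    refine Finset.prod_congr rfl fun T _ => ?_
    rw [← zpow_mul, ← Finset.prod_zpow]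
    refine Finset.prod_congr rfl fun w _ => ?_
    rw [← zpow_mul]
  rw [Finset.prod_congr rfl fun v _ => expand v]
  -- swap products
  have hswap : ∀ (T : Finset (Fin n)) (v : Fin n → Bool),
      (v ∈ (Finset.univ : Finset (Fin n → Bool)) ∧
        T ∈ (Finset.univ.filter (fun i => v i = true)).powerset)
      ↔ (v ∈ Finset.univ.filter (fun v : Fin n → Bool => ∀ i ∉ Tᶜ, v i = true) ∧
          T ∈ (Finset.univ : Finset (Fin n)).powerset) := by
    intro T v
    simp only [Finset.mem_univ, true_and, and_true, Finset.mem_powerset, Finset.mem_filter,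
      Finset.subset_univ, Finset.mem_compl]
    constructor
    · intro h i hi
      have : i ∈ T := by simpa using hi
      have := h this
      simpa using this
    · intro h i hi
      simp only [Finset.mem_filter, Finset.mem_univ, true_and] at hi ⊢
      exact h i (by simp [hi])
  rw [Finset.prod_comm' (fun v T => hswap T v)]
  refine Finset.prod_eq_one fun T _ => ?_
  by_cases hT : T.card + k + 1 ≤ n
  · -- small T: use that c is a degree-k cube
    set ψ : A → ℂˣ := fun a =>
      ∏ w ∈ Finset.univ.filter (fun w : Fin n → Bool => ∀ i ∉ T, w i = false),
        F w a ^ ((-1:ℤ) ^ ht w) with hψdef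
    have hψadd : ∀ a b, ψ (a + b) = ψ a * ψ b := by
      intro a b
      rw [hψdef]
      simp only
      rw [← Finset.prod_mul_distrib]
      refine Finset.prod_congr rfl fun w _ => ?_
      rw [hFmul, mul_zpow]
    have step : ∀ v ∈ Finset.univ.filter (fun v : Fin n → Bool => ∀ i ∉ Tᶜ, v i = true),
        ∏ w ∈ Finset.univ.filter (fun w : Fin n → Bool => ∀ i ∉ T, w i = false),
          F w (c v) ^ ((-1:ℤ) ^ ht w * ((-1:ℤ) ^ T.card * (-1:ℤ) ^ ht v))
        = ψ (c v) ^ ((-1:ℤ) ^ T.card * (-1:ℤ) ^ ht v) := by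
      intro v _
      rw [hψdef]
      simp only
      rw [← Finset.prod_zpow]
      exact Finset.prod_congr rfl fun w _ => by rw [← zpow_mul]
    rw [Finset.prod_congr rfl step, hom_prod_zpow hψadd]
    have hzero : ∑ v ∈ Finset.univ.filter (fun v : Fin n → Bool => ∀ i ∉ Tᶜ, v i = true),
        ((-1:ℤ) ^ T.card * (-1:ℤ) ^ ht v) • c v = 0 := by
      have heq : ∀ v, ((-1:ℤ) ^ T.card * (-1:ℤ) ^ ht v) • c v
          = (-1:ℤ) ^ T.card • ((-1:ℤ) ^ ht v • c v) := fun v => (mul_smul _ _ _)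
      rw [Finset.sum_congr rfl (fun v _ => heq v), ← Finset.smul_sum]
      have hfaceT : IsFace (Tᶜ.card) (Finset.univ.filter
          (fun v : Fin n → Bool => ∀ i ∉ Tᶜ, v i = true)) := by
        refine ⟨Tᶜ, fun _ => true, rfl, ?_⟩
        ext v; simp
      have hdim : k + 1 ≤ Tᶜ.card := by
        have : Tᶜ.card = n - T.card := by
          rw [Finset.card_compl, Fintype.card_fin]
        omega
      rw [sum_face_zero (k + 1) c hc (Tᶜ.card) hdim _ hfaceT, smul_zero]
    rw [hzero, hom_zero hψadd]
  · -- large T: use the character face condition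
    have hTcard : T.card ≤ n := by
      have := Finset.card_le_univ T
      simpa using this
    have hdim : n - k ≤ T.card := by omega
    have hface0 : IsFace (T.card) (Finset.univ.filter
        (fun w : Fin n → Bool => ∀ i ∉ T, w i = false)) := by
      refine ⟨T, fun _ => false, rfl, ?_⟩
      ext w; simp
    refine Finset.prod_eq_one fun v _ => ?_
    have h1 : ∏ w ∈ Finset.univ.filter (fun w : Fin n → Bool => ∀ i ∉ T, w i = false),
        F w (c v) ^ ((-1:ℤ) ^ ht w * ((-1:ℤ) ^ T.card * (-1:ℤ) ^ ht v))
        = (∏ w ∈ Finset.univ.filter (fun w : Fin n → Bool => ∀ i ∉ T, w i = false),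
            F w (c v) ^ ((-1:ℤ) ^ ht w)) ^ ((-1:ℤ) ^ T.card * (-1:ℤ) ^ ht v) := by
      rw [← Finset.prod_zpow]
      exact Finset.prod_congr rfl fun w _ => by rw [← zpow_mul]
    rw [h1, prod_face_one (n - k) (fun w => F w (c v)) (fun S hS => hface' S hS (c v))
      (T.card) hdim _ hface0, one_zpow]
end

section
/- Let A be a compact Hausdorff second-countable abelian group, let n ≥ 1 and 0 ≤ k ≤ n−1 be integers, let c : {0,1}ⁿ → A be a degree-k cube with c(0) = 0, and let f : K_n → Â be a map into the group of continuous characters of A such that for every (n−k)-dimensional face S of {0,1}ⁿ that is contained in K_n one has ∏_{v ∈ S} f(v)^{ε(v)} = 1 (the trivial character), where ε(v) = (−1)^{h(v)}. Then ∏_{v ∈ K_n} f(v)(c(v))^{ε(v)} = 1 in the circle group. -/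
open scoped BigOperators

/-- indicator vertex of a coordinate set -/
def eV {n : ℕ} (U : Finset (Fin n)) : Fin n → Bool := fun i => decide (i ∈ U)

/-- support of a vertex -/
def suppF {n : ℕ} (v : Fin n → Bool) : Finset (Fin n) :=
  Finset.univ.filter (fun i => v i = true)

lemma suppF_eV {n : ℕ} (U : Finset (Fin n)) : suppF (eV U) = U := by
  ext i; simp [suppF, eV]

lemma eV_suppF {n : ℕ} (v : Fin n → Bool) : eV (suppF v) = v := by
  funext i
  simp only [suppF, eV, Finset.mem_filter, Finset.mem_univ, true_and]
  cases h : v i <;> simp [h]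

lemma ht_eV {n : ℕ} (U : Finset (Fin n)) : ht (eV U) = U.card := by
  show (suppF (eV U)).card = U.card
  rw [suppF_eV]

@[to_additive]
lemma face_prod_eq_one {n m d : ℕ} (hmd : m ≤ d) {S : Finset (Fin n → Bool)}
    (hS : IsFace d S) {M : Type*} [CommMonoid M] (g : (Fin n → Bool) → M)
    (hg : ∀ T : Finset (Fin n → Bool), IsFace m T → T ⊆ S → ∏ v ∈ T, g v = 1) :
    ∏ v ∈ S, g v = 1 := by
  obtain ⟨J, y, hJcard, hSdef⟩ := hS
  obtain ⟨J', hJ'sub, hJ'card⟩ := Finset.exists_subset_card_eq (s := J) (n := m) (by rw [hJcard]; exact hmd)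
  set p : (Fin n → Bool) → (Fin n → Bool) := fun v i => if i ∈ J' then false else v i with hp
  rw [← Finset.prod_fiberwise_of_maps_to
    (t := S.image p) (fun v hv => Finset.mem_image_of_mem p hv) g]
  apply Finset.prod_eq_one
  intro w hw
  obtain ⟨v₀, hv₀S, hpv₀⟩ := Finset.mem_image.mp hw
  have hv₀y : ∀ i ∉ J, v₀ i = y i := by
    have := hSdef ▸ hv₀S
    simpa using (Finset.mem_filter.mp this).2
  have hT : S.filter (fun v => p v = w)
      = Finset.univ.filter (fun v => ∀ i ∉ J', v i = w i) := by
    ext v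
    simp only [Finset.mem_filter, Finset.mem_univ, true_and]
    constructor
    · rintro ⟨_, hpv⟩ i hi
      have := congrFun hpv i
      simpa [hp, hi] using this
    · intro h
      have hvS : v ∈ S := by
        rw [hSdef]
        simp only [Finset.mem_filter, Finset.mem_univ, true_and]
        intro i hi
        have hi' : i ∉ J' := fun h' => hi (hJ'sub h')
        have hw' : w i = v₀ i := by rw [← hpv₀]; simp [hp, hi']
        rw [h i hi', hw', hv₀y i hi]
      refine ⟨hvS, ?_⟩
      funext i
      by_cases hi : i ∈ J'
      · have : w i = false := by rw [← hpv₀]; simp [hp, hi]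
        simp [hp, hi, this]
      · simp [hp, hi, h i hi]
  rw [hT]
  exact hg _ ⟨J', w, hJ'card, rfl⟩ (by rw [← hT]; exact Finset.filter_subset _ _)

lemma alt_sum_filter {α : Type*} [DecidableEq α] {U W : Finset α} (hUW : U ⊆ W) :
    ∑ V ∈ W.powerset.filter (fun V => U ⊆ V), (-1 : ℤ) ^ V.card
      = if U = W then (-1 : ℤ) ^ W.card else 0 := by
  have hbij : ∑ V ∈ W.powerset.filter (fun V => U ⊆ V), (-1 : ℤ) ^ V.card
      = ∑ X ∈ (W \ U).powerset, (-1 : ℤ) ^ U.card * (-1 : ℤ) ^ X.card := by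
    apply Finset.sum_nbij' (i := fun V => V \ U) (j := fun X => U ∪ X)
    · intro V hV
      rw [Finset.mem_filter, Finset.mem_powerset] at hV
      exact Finset.mem_powerset.mpr (Finset.sdiff_subset_sdiff hV.1 Finset.Subset.rfl)
    · intro X hX
      rw [Finset.mem_powerset] at hX
      rw [Finset.mem_filter, Finset.mem_powerset]
      exact ⟨Finset.union_subset hUW (hX.trans Finset.sdiff_subset), Finset.subset_union_left⟩
    · intro V hV
      rw [Finset.mem_filter, Finset.mem_powerset] at hV
      exact Finset.union_sdiff_of_subset hV.2
    · intro X hX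
      rw [Finset.mem_powerset] at hX
      exact Finset.union_sdiff_cancel_left (Finset.disjoint_of_subset_right hX Finset.disjoint_sdiff)
    · intro V hV
      rw [Finset.mem_filter, Finset.mem_powerset] at hV
      rw [← pow_add, ← Finset.card_sdiff_add_card_eq_card hV.2, add_comm]
  rw [hbij, ← Finset.mul_sum, Finset.sum_powerset_neg_one_pow_card]
  by_cases h : U = W
  · subst h
    simp
  · have : W \ U ≠ ∅ := by
      intro he
      exact h (Finset.Subset.antisymm hUW (Finset.sdiff_eq_empty_iff_subset.mp he))
    rw [if_neg this, if_neg h, mul_zero]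

def bcoef {n : ℕ} {B : Type*} [AddCommGroup B] (c : (Fin n → Bool) → B)
    (W : Finset (Fin n)) : B :=
  ∑ U ∈ W.powerset, ((-1 : ℤ) ^ (W.card + U.card)) • c (eV U)

lemma moebius_sum {n : ℕ} {B : Type*} [AddCommGroup B] (c : (Fin n → Bool) → B)
    (W : Finset (Fin n)) :
    ∑ V ∈ W.powerset, bcoef c V = c (eV W) := by
  have h1 : ∀ V ∈ W.powerset, bcoef c V
      = ∑ U ∈ W.powerset, if U ⊆ V then ((-1 : ℤ) ^ (V.card + U.card)) • c (eV U) else 0 := by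
    intro V hV
    rw [Finset.mem_powerset] at hV
    have hpow : V.powerset = W.powerset.filter (fun U => U ⊆ V) := by
      ext U
      simp only [Finset.mem_powerset, Finset.mem_filter]
      exact ⟨fun h => ⟨h.trans hV, h⟩, fun h => h.2⟩
    rw [bcoef, hpow, Finset.sum_filter]
  rw [Finset.sum_congr rfl h1, Finset.sum_comm]
  have h2 : ∀ U ∈ W.powerset,
      (∑ V ∈ W.powerset, if U ⊆ V then ((-1 : ℤ) ^ (V.card + U.card)) • c (eV U) else 0)
      = if U = W then c (eV U) else 0 := by
    intro U hU
    rw [Finset.mem_powerset] at hU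
    rw [← Finset.sum_filter]
    have : ∀ V ∈ W.powerset.filter (fun V => U ⊆ V),
        ((-1 : ℤ) ^ (V.card + U.card)) • c (eV U)
        = ((-1 : ℤ) ^ V.card) • (((-1 : ℤ) ^ U.card) • c (eV U)) := by
      intro V _
      rw [pow_add, mul_smul]
    rw [Finset.sum_congr rfl this, ← Finset.sum_smul, alt_sum_filter hU]
    by_cases h : U = W
    · subst h
      rw [if_pos rfl, if_pos rfl, smul_smul, ← pow_add, Even.neg_one_pow ⟨U.card, rfl⟩, one_smul]
    · rw [if_neg h, if_neg h, zero_smul]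
  rw [Finset.sum_congr rfl h2, Finset.sum_ite_eq' W.powerset W (fun U => c (eV U)),
    if_pos (Finset.mem_powerset_self W)]

lemma bcoef_eq_zero {n k : ℕ} {B : Type*} [AddCommGroup B] {c : (Fin n → Bool) → B}
    (hc : IsDegCube k c) {W : Finset (Fin n)} (hW : k + 1 ≤ W.card) :
    bcoef c W = 0 := by
  have hface : IsFace W.card
      (Finset.univ.filter (fun v : Fin n → Bool => ∀ i ∉ W, v i = false)) :=
    ⟨W, fun _ => false, rfl, rfl⟩
  have h0 : ∑ v ∈ Finset.univ.filter (fun v : Fin n → Bool => ∀ i ∉ W, v i = false),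
      ((-1 : ℤ) ^ ht v) • c v = 0 :=
    face_sum_eq_zero hW hface _ (fun T hT _ => hc T hT)
  have hbij : ∑ U ∈ W.powerset, ((-1 : ℤ) ^ U.card) • c (eV U)
      = ∑ v ∈ Finset.univ.filter (fun v : Fin n → Bool => ∀ i ∉ W, v i = false),
        ((-1 : ℤ) ^ ht v) • c v := by
    apply Finset.sum_nbij' (i := eV) (j := suppF)
    · intro U hU
      rw [Finset.mem_powerset] at hU
      simp only [Finset.mem_filter, Finset.mem_univ, true_and]
      intro i hi
      simp only [eV, decide_eq_false_iff_not]
      exact fun h => hi (hU h)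
    · intro v hv
      simp only [Finset.mem_filter, Finset.mem_univ, true_and] at hv
      rw [Finset.mem_powerset]
      intro i hi
      simp only [suppF, Finset.mem_filter, Finset.mem_univ, true_and] at hi
      by_contra h
      rw [hv i h] at hi
      exact Bool.false_ne_true hi
    · intro U _; exact suppF_eV U
    · intro v _; exact eV_suppF v
    · intro U _; rw [ht_eV]
  have : bcoef c W = ((-1 : ℤ) ^ W.card) •
      ∑ U ∈ W.powerset, ((-1 : ℤ) ^ U.card) • c (eV U) := by
    rw [bcoef, Finset.smul_sum]
    exact Finset.sum_congr rfl (fun U _ => by rw [pow_add, mul_smul])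
  rw [this, hbij, h0, smul_zero]

/-- if `c : {0,1}ⁿ → A` is a degree-`k` cube with `c(0) = 0` in a compact
abelian group `A` and `f` assigns a continuous character of `A` to each vertex of
`K_n = {0,1}ⁿ \ {0}` so that the alternating product of the characters over every
`(n−k)`-dimensional face contained in `K_n` is the trivial character, then
`∏_{v ∈ K_n} f(v)(c(v))^{(−1)^{h(v)}} = 1`. -/
theorem character_cube_pairing_corner
    {A : Type*} [AddCommGroup A] [TopologicalSpace A] [IsTopologicalAddGroup A]
    [CompactSpace A] [T2Space A] [SecondCountableTopology A]
    (n : ℕ) (hn : 1 ≤ n) (k : ℕ) (hk : k ≤ n - 1)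
    (c : (Fin n → Bool) → A) (hc : IsDegCube k c) (hc0 : c (fun _ => false) = 0)
    (f : (Fin n → Bool) → A → ℂ)
    (hχcont : ∀ v, (v ≠ fun _ => false) → Continuous (f v))
    (hχnorm : ∀ v, (v ≠ fun _ => false) → ∀ a, ‖f v a‖ = 1)
    (hχmul : ∀ v, (v ≠ fun _ => false) → ∀ a b, f v (a + b) = f v a * f v b)
    (hface : ∀ S : Finset (Fin n → Bool), IsFace (n - k) S →
      (fun _ => false) ∉ S →
      ∀ a : A, ∏ v ∈ S, (f v a) ^ ((-1 : ℤ) ^ ht v) = 1) :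
    ∏ v ∈ Finset.univ.filter (fun v : Fin n → Bool => v ≠ fun _ => false),
      (f v (c v)) ^ ((-1 : ℤ) ^ ht v) = 1 := by
  have hf0 : ∀ v, (v ≠ fun _ => false) → f v 0 = 1 := by
    intro v hv
    have h := hχmul v hv 0 0
    rw [add_zero] at h
    have hnz : f v 0 ≠ 0 := by
      intro h0
      have := hχnorm v hv 0
      rw [h0] at this
      simp at this
    exact (mul_left_cancel₀ hnz (by rw [mul_one, ← h])).symm
  have hfsum : ∀ v, (v ≠ fun _ => false) → ∀ (s : Finset (Finset (Fin n)))
      (g : Finset (Fin n) → A), f v (∑ W ∈ s, g W) = ∏ W ∈ s, f v (g W) := by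
    intro v hv s g
    induction s using Finset.induction with
    | empty => simpa using hf0 v hv
    | insert _ _ h ih => rw [Finset.sum_insert h, Finset.prod_insert h, hχmul v hv, ih]
  set K := Finset.univ.filter (fun v : Fin n → Bool => v ≠ fun _ => false) with hK
  have step1 : ∀ v ∈ K, (f v (c v)) ^ ((-1 : ℤ) ^ ht v)
      = ∏ W ∈ Finset.univ, if W ⊆ suppF v then
          (f v (bcoef c W)) ^ ((-1 : ℤ) ^ ht v) else 1 := by
    intro v hv
    have hvne : (v ≠ fun _ => false) := (Finset.mem_filter.mp hv).2
    have hcv : c v = ∑ W ∈ (suppF v).powerset, bcoef c W := by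
      rw [moebius_sum c (suppF v), eV_suppF]
    have hpows : (suppF v).powerset = Finset.univ.filter (fun W => W ⊆ suppF v) := by
      ext W
      simp [Finset.mem_powerset]
    rw [hcv, hfsum v hvne, ← Finset.prod_zpow, hpows, Finset.prod_filter]
  rw [Finset.prod_congr rfl step1, Finset.prod_comm]
  apply Finset.prod_eq_one
  intro W _
  rw [← Finset.prod_filter]
  by_cases hW0 : W = ∅
  · subst hW0
    have he : eV (∅ : Finset (Fin n)) = (fun _ => false) := by
      funext i; simp [eV]
    have hb : bcoef c ∅ = 0 := by
      rw [bcoef, Finset.powerset_empty, Finset.sum_singleton, he, hc0, smul_zero]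
    apply Finset.prod_eq_one
    intro v hv
    have hvne : (v ≠ fun _ => false) := (Finset.mem_filter.mp (Finset.mem_filter.mp hv).1).2
    rw [hb, hf0 v hvne, one_zpow]
  by_cases hWk : W.card ≤ k
  · have hWne : W.Nonempty := Finset.nonempty_iff_ne_empty.mpr hW0
    have hSet : K.filter (fun v => W ⊆ suppF v)
        = Finset.univ.filter (fun v : Fin n → Bool => ∀ i ∉ Wᶜ, v i = true) := by
      ext v
      simp only [hK, Finset.mem_filter, Finset.mem_univ, true_and, Finset.notMem_compl]
      constructor
      · rintro ⟨_, hsub⟩ i hi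
        have := hsub hi
        simpa [suppF] using this
      · intro h
        constructor
        · intro hveq
          obtain ⟨i, hi⟩ := hWne
          have := h i hi
          simp [hveq] at this
        · intro i hi
          simp only [suppF, Finset.mem_filter, Finset.mem_univ, true_and]
          exact h i hi
    rw [hSet]
    have hfaceS : IsFace (n - W.card)
        (Finset.univ.filter (fun v : Fin n → Bool => ∀ i ∉ Wᶜ, v i = true)) := by
      refine ⟨Wᶜ, fun _ => true, ?_, rfl⟩
      rw [Finset.card_compl]
      simp
    refine face_prod_eq_one (Nat.sub_le_sub_left hWk n) hfaceS _ ?_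
    intro T hT hTS
    refine hface T hT ?_ (bcoef c W)
    intro hzT
    have hz := Finset.mem_filter.mp (hTS hzT)
    obtain ⟨i, hi⟩ := hWne
    have := hz.2 i (Finset.notMem_compl.mpr hi)
    exact Bool.false_ne_true this
  · push_neg at hWk
    rw [bcoef_eq_zero hc hWk]
    apply Finset.prod_eq_one
    intro v hv
    have hvne : (v ≠ fun _ => false) := (Finset.mem_filter.mp (Finset.mem_filter.mp hv).1).2
    rw [hf0 v hvne, one_zpow]
end
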